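/- Let t ∈ (0, 1/β]. Suppose c, w ∈ ℝ^n and R² ∈ ℝ satisfy ‖x* − c‖² ≤ R² − (2/α)·(F(w) − F*), and suppose x ∈ ℝ^n satisfies F(x⁺) ≤ F(w) − (t/2)·‖G_t(x)‖² and ‖x^{++} − c‖² ≥ ‖G_t(x)‖²/α². Then there exists c' ∈ ℝ^n such that ‖x* − c'‖² ≤ (1 − √(αt))·R² − (2/α)·(F(x⁺) − F*). -/

import Mathlib

open scoped RealInnerProductSpace
open Topology Filter

section Helpers
variable {E : Type*} [NormedAddCommGroup E] [InnerProductSpace ℝ E] [CompleteSpace E]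

lemma conv_first_order {g : E → ℝ} (hg : ConvexOn ℝ Set.univ g) {a : E} {g' : E}
    (hd : HasGradientAt g g' a) (b : E) : ⟪g', b - a⟫ ≤ g b - g a := by
  set φ : ℝ → ℝ := fun s => g (a + s • (b - a)) with hφ
  have hda : HasDerivAt φ ⟪g', b - a⟫ 0 := by
    have h1 : HasFDerivAt g (InnerProductSpace.toDual ℝ E g' : E →L[ℝ] ℝ)
        (a + (0:ℝ) • (b - a)) := by
      rw [← hasGradientAt_iff_hasFDerivAt]; simpa using hd
    have h2 : HasDerivAt (fun s : ℝ => a + s • (b - a)) (b - a) 0 := by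
      simpa using ((hasDerivAt_id (0:ℝ)).smul_const (b - a)).const_add a
    have := h1.comp_hasDerivAt (x := (0:ℝ)) h2
    simpa only [Function.comp_def, InnerProductSpace.toDual_apply_apply] using this
  have key : ∀ s ∈ Set.Ioc (0:ℝ) 1, slope φ 0 s ≤ g b - g a := by
    intro s hs
    have hcvx := hg.2 (Set.mem_univ a) (Set.mem_univ b) (by linarith [hs.2] : (0:ℝ) ≤ 1 - s)
      (le_of_lt hs.1) (by ring)
    have heq : a + s • (b - a) = (1 - s) • a + s • b := by
      rw [smul_sub]; module
    have h3 : φ s ≤ (1 - s) * g a + s * g b := by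
      rw [hφ]; simp only; rw [heq]; simpa [smul_eq_mul] using hcvx
    have hφ0 : φ 0 = g a := by simp [hφ]
    rw [slope_def_field, hφ0, sub_zero, div_le_iff₀ hs.1]
    nlinarith [hs.1]
  have htends : Filter.Tendsto (slope φ 0) (𝓝[Set.Ioi 0] 0) (𝓝 ⟪g', b - a⟫) := by
    have := hasDerivWithinAt_iff_tendsto_slope.mp (hda.hasDerivWithinAt (s := Set.Ioi 0))
    rwa [Set.diff_singleton_eq_self (by simp : (0:ℝ) ∉ Set.Ioi 0)] at this
  refine le_of_tendsto htends ?_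
  filter_upwards [Ioc_mem_nhdsGT_of_mem (by norm_num : (0:ℝ) ∈ Set.Ico (0:ℝ) 1)] with s hs
  exact key s hs

lemma line_hasDerivAt {f : E → ℝ} (hf : Differentiable ℝ f) (a d : E) (s : ℝ) :
    HasDerivAt (fun s : ℝ => f (a + s • d)) ⟪gradient f (a + s • d), d⟫ s := by
  have h1 : HasFDerivAt f (InnerProductSpace.toDual ℝ E (gradient f (a + s • d)) : E →L[ℝ] ℝ)
      (a + s • d) := by
    rw [← hasGradientAt_iff_hasFDerivAt]; exact (hf _).hasGradientAt
  have h2 : HasDerivAt (fun u : ℝ => a + u • d) d s := by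
    simpa using ((hasDerivAt_id s).smul_const d).const_add a
  simpa only [Function.comp_def, InnerProductSpace.toDual_apply_apply] using h1.comp_hasDerivAt (x := s) h2

lemma descent_lemma {f : E → ℝ} {β : ℝ} (hβ : 0 ≤ β) (hf : Differentiable ℝ f)
    (hlip : LipschitzWith β.toNNReal (fun z => gradient f z)) (a b : E) :
    f b ≤ f a + ⟪gradient f a, b - a⟫ + β / 2 * ‖b - a‖ ^ 2 := by
  set d := b - a with hd
  set χ : ℝ → ℝ := fun s =>
    f a + s * ⟪gradient f a, d⟫ + β / 2 * s ^ 2 * ‖d‖ ^ 2 - f (a + s • d) with hχ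
  have hder : ∀ s : ℝ, HasDerivAt χ
      (⟪gradient f a, d⟫ + β * s * ‖d‖ ^ 2 - ⟪gradient f (a + s • d), d⟫) s := by
    intro s
    have h1 : HasDerivAt (fun s : ℝ => f a + s * ⟪gradient f a, d⟫ + β / 2 * s ^ 2 * ‖d‖ ^ 2)
        (⟪gradient f a, d⟫ + β * s * ‖d‖ ^ 2) s := by
      have : HasDerivAt (fun s : ℝ => f a + s * ⟪gradient f a, d⟫ + β / 2 * s ^ 2 * ‖d‖ ^ 2)
          (0 + 1 * ⟪gradient f a, d⟫ + β / 2 * (2 * s ^ 1) * ‖d‖ ^ 2) s :=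
        (((hasDerivAt_const s (f a)).add
          ((hasDerivAt_id s).mul_const _)).add
          ((((hasDerivAt_pow 2 s)).const_mul (β / 2)).mul_const _))
      convert this using 1; ring
    exact h1.sub (line_hasDerivAt hf a d s)
  have hderiv_nonneg : ∀ s ∈ interior (Set.Icc (0:ℝ) 1), 0 ≤ deriv χ s := by
    intro s hs
    rw [interior_Icc] at hs
    rw [(hder s).deriv]
    have hL : ‖gradient f (a + s • d) - gradient f a‖ ≤ β * (s * ‖d‖) := by
      have := hlip.dist_le_mul (a + s • d) a
      simp only [dist_eq_norm, Real.coe_toNNReal β hβ] at this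
      calc ‖gradient f (a + s • d) - gradient f a‖ ≤ β * ‖a + s • d - a‖ := this
        _ = β * (‖s‖ * ‖d‖) := by rw [add_sub_cancel_left, norm_smul]
        _ = β * (s * ‖d‖) := by rw [Real.norm_eq_abs, abs_of_pos hs.1]
    have hcs : ⟪gradient f (a + s • d) - gradient f a, d⟫ ≤ β * s * ‖d‖ ^ 2 := by
      calc ⟪gradient f (a + s • d) - gradient f a, d⟫
          ≤ ‖gradient f (a + s • d) - gradient f a‖ * ‖d‖ := real_inner_le_norm _ _
        _ ≤ β * (s * ‖d‖) * ‖d‖ := mul_le_mul_of_nonneg_right hL (norm_nonneg d)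
        _ = β * s * ‖d‖ ^ 2 := by ring
    rw [inner_sub_left] at hcs
    linarith
  have hmono : MonotoneOn χ (Set.Icc (0:ℝ) 1) := by
    apply monotoneOn_of_deriv_nonneg (convex_Icc 0 1)
    · exact fun s _ => ((hder s).differentiableAt).continuousAt.continuousWithinAt
    · exact fun s _ => ((hder s).differentiableAt).differentiableWithinAt
    · exact hderiv_nonneg
  have h01 := hmono (Set.mem_Icc.mpr ⟨le_refl 0, zero_le_one⟩)
    (Set.mem_Icc.mpr ⟨zero_le_one, le_refl 1⟩) zero_le_one
  have hχ0 : χ 0 = 0 := by simp [hχ]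
  have hχ1 : χ 1 = f a + ⟪gradient f a, d⟫ + β / 2 * ‖d‖ ^ 2 - f b := by
    simp [hχ, hd]
  rw [hχ0, hχ1] at h01
  linarith

lemma prox_subgrad {h : E → ℝ} (hconv : ConvexOn ℝ Set.univ h) {t : ℝ} (ht : 0 < t)
    {y p : E} (hp : IsMinOn (fun z => t * h z + ‖z - y‖ ^ 2 / 2) Set.univ p) (z : E) :
    t * (h p - h z) ≤ ⟪p - y, z - p⟫ := by
  have key : ∀ l ∈ Set.Ioc (0:ℝ) 1, t * (h p - h z) ≤ ⟪p - y, z - p⟫ + l / 2 * ‖z - p‖ ^ 2 := by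
    intro l hl
    have hmin := hp (Set.mem_univ (p + l • (z - p)))
    simp only [Set.mem_setOf_eq] at hmin
    have hcomb : p + l • (z - p) = (1 - l) • p + l • z := by rw [smul_sub]; module
    have hcvx : h (p + l • (z - p)) ≤ (1 - l) * h p + l * h z := by
      rw [hcomb]
      simpa [smul_eq_mul] using hconv.2 (Set.mem_univ p) (Set.mem_univ z)
        (by linarith [hl.2] : (0:ℝ) ≤ 1 - l) (le_of_lt hl.1) (by ring)
    have hexp : ‖p + l • (z - p) - y‖ ^ 2
        = ‖p - y‖ ^ 2 + 2 * (l * ⟪p - y, z - p⟫) + l ^ 2 * ‖z - p‖ ^ 2 := by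
      have : p + l • (z - p) - y = (p - y) + l • (z - p) := by module
      rw [this, norm_add_sq_real, real_inner_smul_right, norm_smul, Real.norm_eq_abs,
        abs_of_pos hl.1, mul_pow]
    have := hmin
    rw [hexp] at this
    have h2 : l * (t * (h p - h z)) ≤ l * (⟪p - y, z - p⟫ + l / 2 * ‖z - p‖ ^ 2) := by
      nlinarith [hl.1]
    exact le_of_mul_le_mul_left (by linarith [h2]) hl.1
  have htends : Tendsto (fun l : ℝ => ⟪p - y, z - p⟫ + l / 2 * ‖z - p‖ ^ 2)
      (𝓝[Set.Ioi (0:ℝ)] 0) (𝓝 ⟪p - y, z - p⟫) := by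
    have : Tendsto (fun l : ℝ => ⟪p - y, z - p⟫ + l / 2 * ‖z - p‖ ^ 2)
        (𝓝 (0:ℝ)) (𝓝 (⟪p - y, z - p⟫ + 0 / 2 * ‖z - p‖ ^ 2)) := by
      apply Continuous.tendsto; continuity
    simpa using this.mono_left nhdsWithin_le_nhds
  refine ge_of_tendsto htends ?_
  filter_upwards [Ioc_mem_nhdsGT_of_mem (by norm_num : (0:ℝ) ∈ Set.Ico (0:ℝ) 1)] with l hl
  exact key l hl

end Helpers

set_option maxHeartbeats 1000000 in
/-- one-step shrinkage of GeoPG. If `‖x* − c‖² ≤ R² − (2/α)(F(w) − F*)`,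
`F(x⁺) ≤ F(w) − (t/2)‖G_t(x)‖²` and `‖x^{++} − c‖² ≥ ‖G_t(x)‖²/α²`, then there is `c'`
with `‖x* − c'‖² ≤ (1 − √(αt))R² − (2/α)(F(x⁺) − F*)`. Here `F = f + h`,
`xplus = Prox_{th}(x − t∇f(x))`, `G_t(x) = t⁻¹ • (x - xplus)`,
`x^{++} = x − G_t(x)/α`. -/
theorem stmt_12 (n : ℕ) (α β t : ℝ) (hα : 0 < α) (hαβ : α ≤ β)
    (f h : EuclideanSpace ℝ (Fin n) → ℝ)
    (hsc : ConvexOn ℝ Set.univ (fun z => f z - α / 2 * ‖z‖ ^ 2))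
    (hf : Differentiable ℝ f)
    (hlip : LipschitzWith β.toNNReal (fun z => gradient f z))
    (hconv : ConvexOn ℝ Set.univ h) (hlsc : LowerSemicontinuous h)
    (ht : t ∈ Set.Ioc (0 : ℝ) (1 / β))
    (xstar : EuclideanSpace ℝ (Fin n))
    (hmin : IsMinOn (fun z => f z + h z) Set.univ xstar)
    (c w x xplus : EuclideanSpace ℝ (Fin n)) (R2 : ℝ)
    (hprox : IsMinOn (fun z => t * h z + ‖z - (x - t • gradient f x)‖ ^ 2 / 2)
      Set.univ xplus)
    (hball : ‖xstar - c‖ ^ 2 ≤ R2 - 2 / α * ((f w + h w) - (f xstar + h xstar)))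
    (hdec : f xplus + h xplus ≤ (f w + h w) - t / 2 * ‖t⁻¹ • (x - xplus)‖ ^ 2)
    (hfar : ‖(x - α⁻¹ • (t⁻¹ • (x - xplus))) - c‖ ^ 2 ≥ ‖t⁻¹ • (x - xplus)‖ ^ 2 / α ^ 2) :
    ∃ c' : EuclideanSpace ℝ (Fin n),
      ‖xstar - c'‖ ^ 2 ≤ (1 - Real.sqrt (α * t)) * R2
        - 2 / α * ((f xplus + h xplus) - (f xstar + h xstar)) := by
  obtain ⟨htpos, htle⟩ := ht
  have hβ : 0 < β := lt_of_lt_of_le hα hαβ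
  have hβt : β * t ≤ 1 := by
    rw [le_div_iff₀ hβ] at htle; linarith [htle]
  have hα' : (α : ℝ) ≠ 0 := ne_of_gt hα
  set G := t⁻¹ • (x - xplus) with hG
  have htG : t • G = x - xplus := by rw [hG]; exact smul_inv_smul₀ (ne_of_gt htpos) _
  have hxp : xplus = x - t • G := by rw [htG]; module
  set gx := gradient f x with hgx
  clear_value G gx
  -- Step 1 : descent lemma
  have hS1 : f xplus ≤ f x - t * ⟪gx, G⟫ + t / 2 * ‖G‖ ^ 2 := by
    have hd := descent_lemma (le_of_lt hβ) hf hlip x xplus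
    rw [← hgx] at hd
    have e1 : xplus - x = -(t • G) := by rw [hxp]; module
    have e2 : ⟪gx, xplus - x⟫ = -(t * ⟪gx, G⟫) := by
      rw [e1, inner_neg_right, real_inner_smul_right]
    have e3 : ‖xplus - x‖ ^ 2 = t ^ 2 * ‖G‖ ^ 2 := by
      rw [e1, norm_neg, norm_smul, Real.norm_eq_abs, abs_of_pos htpos, mul_pow]
    rw [e2, e3] at hd
    nlinarith [sq_nonneg ‖G‖, htpos]
  -- Step 2 : strong convexity first-order inequality
  have hS2 : f x + ⟪gx, xstar - x⟫ + α / 2 * ‖xstar - x‖ ^ 2 ≤ f xstar := by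
    have hq : HasGradientAt (fun z : EuclideanSpace ℝ (Fin n) => f z - α / 2 * ‖z‖ ^ 2)
        (gx - α • x) x := by
      rw [hasGradientAt_iff_hasFDerivAt]
      have h1 : HasFDerivAt f
          (InnerProductSpace.toDual ℝ (EuclideanSpace ℝ (Fin n)) gx :
            EuclideanSpace ℝ (Fin n) →L[ℝ] ℝ) x := by
        rw [← hasGradientAt_iff_hasFDerivAt, hgx]; exact (hf x).hasGradientAt
      have h2 : HasFDerivAt (fun z : EuclideanSpace ℝ (Fin n) => ‖z‖ ^ 2)
          (2 • (innerSL ℝ x)) x := by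
        simpa using (hasFDerivAt_id x).norm_sq
      have h3 := h1.sub (h2.const_mul (α / 2))
      refine h3.congr_fderiv ?_
      ext v
      simp [InnerProductSpace.toDual_apply_apply, inner_sub_left, real_inner_smul_left]
      ring
    have hfo := conv_first_order hsc hq xstar
    have e4 : ⟪gx - α • x, xstar - x⟫ = ⟪gx, xstar - x⟫ - α * ⟪x, xstar - x⟫ := by
      rw [inner_sub_left, real_inner_smul_left]
    have e5 : ‖xstar - x‖ ^ 2 = ‖xstar‖ ^ 2 - 2 * ⟪x, xstar⟫ + ‖x‖ ^ 2 := by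
      rw [@norm_sub_sq_real, real_inner_comm]
    have e6 : ⟪x, xstar - x⟫ = ⟪x, xstar⟫ - ‖x‖ ^ 2 := by
      rw [inner_sub_right, real_inner_self_eq_norm_sq]
    rw [e4, e6] at hfo
    nlinarith [hfo]
  -- Step 3 : prox subgradient inequality
  have hS3 : h xplus ≤ h xstar + ⟪gx, xstar - x⟫ + t * ⟪gx, G⟫
      - ⟪G, xstar - x⟫ - t * ‖G‖ ^ 2 := by
    have hp := prox_subgrad hconv htpos hprox xstar
    have e7 : xplus - (x - t • gx) = t • (gx - G) := by rw [hxp]; module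
    have e8 : xstar - xplus = (xstar - x) + t • G := by rw [hxp]; module
    rw [e7, e8] at hp
    rw [real_inner_smul_left, inner_sub_left, inner_add_right, inner_add_right,
      real_inner_smul_right, real_inner_smul_right, real_inner_self_eq_norm_sq] at hp
    have := (mul_le_mul_iff_right₀ htpos).mp (by linarith [hp] :
      t * (h xplus - h xstar) ≤ t * (⟪gx, xstar - x⟫ + t * ⟪gx, G⟫
        - ⟪G, xstar - x⟫ - t * ‖G‖ ^ 2))
    linarith
  -- Key inequality
  have hK : ⟪G, xstar - x⟫ ≤ -((f xplus + h xplus) - (f xstar + h xstar))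
      - t / 2 * ‖G‖ ^ 2 - α / 2 * ‖xstar - x‖ ^ 2 := by
    linarith
  -- Ball 2
  set p := x - α⁻¹ • G with hp'
  clear_value p
  have hB : ‖xstar - p‖ ^ 2 ≤ (1 - α * t) * (‖G‖ ^ 2 / α ^ 2)
      - 2 / α * ((f xplus + h xplus) - (f xstar + h xstar)) := by
    have e9 : xstar - p = (xstar - x) + α⁻¹ • G := by rw [hp']; module
    have e10 : ‖xstar - p‖ ^ 2 = ‖xstar - x‖ ^ 2 + 2 * (α⁻¹ * ⟪G, xstar - x⟫)
        + α⁻¹ ^ 2 * ‖G‖ ^ 2 := by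
      rw [e9, norm_add_sq_real, real_inner_smul_right, norm_smul, Real.norm_eq_abs,
        abs_of_pos (inv_pos.mpr hα), mul_pow, real_inner_comm]
    have m2 : 2 * (α⁻¹ * ⟪G, xstar - x⟫) ≤ 2 * (α⁻¹ *
        (-((f xplus + h xplus) - (f xstar + h xstar)) - t / 2 * ‖G‖ ^ 2
          - α / 2 * ‖xstar - x‖ ^ 2)) := by
      have := mul_le_mul_of_nonneg_left hK (le_of_lt (inv_pos.mpr hα))
      linarith
    have id2 : 2 * (α⁻¹ * (-((f xplus + h xplus) - (f xstar + h xstar)) - t / 2 * ‖G‖ ^ 2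
          - α / 2 * ‖xstar - x‖ ^ 2)) + ‖xstar - x‖ ^ 2 + α⁻¹ ^ 2 * ‖G‖ ^ 2
        = (1 - α * t) * (‖G‖ ^ 2 / α ^ 2)
          - 2 / α * ((f xplus + h xplus) - (f xstar + h xstar)) := by
      field_simp
      ring
    linarith [e10, m2, id2]
  -- Ball 1
  have hA : ‖xstar - c‖ ^ 2 ≤ R2 - α * t * (‖G‖ ^ 2 / α ^ 2)
      - 2 / α * ((f xplus + h xplus) - (f xstar + h xstar)) := by
    have m1 : 2 / α * (((f xplus + h xplus) - (f xstar + h xstar)) + t / 2 * ‖G‖ ^ 2)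
        ≤ 2 / α * ((f w + h w) - (f xstar + h xstar)) := by
      apply mul_le_mul_of_nonneg_left _ (by positivity)
      linarith [hdec]
    have id1 : 2 / α * (((f xplus + h xplus) - (f xstar + h xstar)) + t / 2 * ‖G‖ ^ 2)
        = 2 / α * ((f xplus + h xplus) - (f xstar + h xstar))
          + α * t * (‖G‖ ^ 2 / α ^ 2) := by
      field_simp
    linarith [hball, m1, id1]
  -- two-ball combination
  set lam : ℝ := Real.sqrt (α * t) with hlam
  clear_value lam
  have hat0 : (0:ℝ) ≤ α * t := by positivity
  have hlamsq : lam ^ 2 = α * t := by rw [hlam]; exact Real.sq_sqrt hat0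
  have hlam0 : 0 ≤ lam := by rw [hlam]; exact Real.sqrt_nonneg _
  have hlam1 : lam ≤ 1 := by
    rw [hlam, show (1:ℝ) = Real.sqrt 1 by simp]
    apply Real.sqrt_le_sqrt
    nlinarith [mul_le_mul_of_nonneg_right hαβ (le_of_lt htpos)]
  refine ⟨c + lam • (p - c), ?_⟩
  have eN : ‖xstar - (c + lam • (p - c))‖ ^ 2
      = (1 - lam) ^ 2 * ‖xstar - c‖ ^ 2
        + 2 * ((1 - lam) * (lam * ⟪xstar - c, xstar - p⟫))
        + lam ^ 2 * ‖xstar - p‖ ^ 2 := by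
    have e11 : xstar - (c + lam • (p - c)) = (1 - lam) • (xstar - c) + lam • (xstar - p) := by
      rw [sub_smul, smul_sub, smul_sub, smul_sub, one_smul]; module
    rw [e11, norm_add_sq_real, norm_smul, norm_smul, real_inner_smul_left,
      real_inner_smul_right, Real.norm_eq_abs, Real.norm_eq_abs, mul_pow, mul_pow,
      sq_abs, sq_abs]
  have eD : ‖p - c‖ ^ 2 = ‖xstar - c‖ ^ 2 - 2 * ⟪xstar - c, xstar - p⟫
      + ‖xstar - p‖ ^ 2 := by
    have e12 : p - c = (xstar - c) - (xstar - p) := by module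
    rw [e12, @norm_sub_sq_real]
  have hD : ‖G‖ ^ 2 / α ^ 2 ≤ ‖p - c‖ ^ 2 := hfar
  have hg2 : (0:ℝ) ≤ ‖G‖ ^ 2 / α ^ 2 := by positivity
  rw [eN]
  nlinarith [mul_le_mul_of_nonneg_left hA (by linarith : (0:ℝ) ≤ 1 - lam),
    mul_le_mul_of_nonneg_left hB hlam0,
    mul_le_mul_of_nonneg_left (le_trans hD (le_of_eq eD))
      (mul_nonneg hlam0 (by linarith : (0:ℝ) ≤ 1 - lam)),
    hlamsq, hg2, hlam0, hlam1]
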